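/- For any measurement assemblage {B_{a|x}} on ℂ^d and any density matrix ρ, the steering robustness of the state assemblage {ρ^{1/2} B_{a|x} ρ^{1/2}} is at most the incompatibility robustness of {B_{a|x}}: SR(ρ^{1/2} B ρ^{1/2}) ≤ IR(B). -/

import Mathlib

open Matrix Kronecker BigOperators ComplexOrder

noncomputable section

/-- A density matrix: positive semidefinite with unit trace. -/
def IsDensity {d : ℕ} (ρ : Matrix (Fin d) (Fin d) ℂ) : Prop :=
  ρ.PosSemidef ∧ ρ.trace = 1

/-- A POVM: positive semidefinite effects summing to the identity. -/
def IsPOVM {d nl : ℕ} (G : Fin nl → Matrix (Fin d) (Fin d) ℂ) : Prop :=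
  (∀ l, (G l).PosSemidef) ∧ ∑ l, G l = 1

/-- A measurement assemblage: for each setting `x`, a POVM `a ↦ M x a`. -/
def IsMA {d na nx : ℕ} (M : Fin nx → Fin na → Matrix (Fin d) (Fin d) ℂ) : Prop :=
  (∀ x a, (M x a).PosSemidef) ∧ ∀ x, ∑ a, M x a = 1

/-- Joint measurability: `M x a = ∑ λ p(a|x,λ) G λ` for a parent POVM `G`. -/
def JM {d na nx : ℕ} (M : Fin nx → Fin na → Matrix (Fin d) (Fin d) ℂ) : Prop :=
  ∃ (nl : ℕ) (G : Fin nl → Matrix (Fin d) (Fin d) ℂ)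
    (p : Fin nx → Fin na → Fin nl → ℝ),
    IsPOVM G ∧ (∀ x a l, 0 ≤ p x a l) ∧ (∀ x l, ∑ a, p x a l = 1) ∧
    ∀ x a, M x a = ∑ l, (p x a l : ℂ) • G l

/-- A state assemblage: PSD elements with an `x`-independent reduced density matrix. -/
def IsSA {d na nx : ℕ} (σ : Fin nx → Fin na → Matrix (Fin d) (Fin d) ℂ) : Prop :=
  (∀ x a, (σ x a).PosSemidef) ∧
  ∃ ρ : Matrix (Fin d) (Fin d) ℂ, IsDensity ρ ∧ ∀ x, ∑ a, σ x a = ρ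

/-- Local-hidden-state model: `σ x a = ∑ λ q(λ) p(a|x,λ) ρ_λ`. -/
def LHS {d na nx : ℕ} (σ : Fin nx → Fin na → Matrix (Fin d) (Fin d) ℂ) : Prop :=
  ∃ (nl : ℕ) (q : Fin nl → ℝ) (p : Fin nx → Fin na → Fin nl → ℝ)
    (ρ : Fin nl → Matrix (Fin d) (Fin d) ℂ),
    (∀ l, 0 ≤ q l) ∧ (∑ l, q l = 1) ∧
    (∀ x a l, 0 ≤ p x a l) ∧ (∀ x l, ∑ a, p x a l = 1) ∧
    (∀ l, IsDensity (ρ l)) ∧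
    ∀ x a, σ x a = ∑ l, ((q l * p x a l : ℝ) : ℂ) • ρ l

/-- Incompatibility robustness. -/
def IR {d na nx : ℕ} (B : Fin nx → Fin na → Matrix (Fin d) (Fin d) ℂ) : ℝ :=
  sInf {t : ℝ | 0 ≤ t ∧ ∃ N, IsMA N ∧
    JM (fun x a => (((1 + t : ℝ))⁻¹ : ℂ) • (B x a + (t : ℂ) • N x a))}

/-- Steering robustness. -/
def SR {d na nx : ℕ} (σ : Fin nx → Fin na → Matrix (Fin d) (Fin d) ℂ) : ℝ :=
  sInf {t : ℝ | 0 ≤ t ∧ ∃ ξ, IsSA ξ ∧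
    LHS (fun x a => (((1 + t : ℝ))⁻¹ : ℂ) • (σ x a + (t : ℂ) • ξ x a))}

/-- Incompatible weight. -/
def IW {d na nx : ℕ} (B : Fin nx → Fin na → Matrix (Fin d) (Fin d) ℂ) : ℝ :=
  sInf {t : ℝ | 0 ≤ t ∧ t ≤ 1 ∧ ∃ N O, IsMA N ∧ JM O ∧
    ∀ x a, B x a = (t : ℂ) • N x a + ((1 - t : ℝ) : ℂ) • O x a}

/-- Steerable weight. -/
def SW {d na nx : ℕ} (σ : Fin nx → Fin na → Matrix (Fin d) (Fin d) ℂ) : ℝ :=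
  sInf {t : ℝ | 0 ≤ t ∧ t ≤ 1 ∧ ∃ ξ τ, IsSA ξ ∧ LHS τ ∧
    ∀ x a, σ x a = (t : ℂ) • ξ x a + ((1 - t : ℝ) : ℂ) • τ x a}

/-- Positive map on matrices. -/
def PosMap {d : ℕ} (E : Matrix (Fin d) (Fin d) ℂ →ₗ[ℂ] Matrix (Fin d) (Fin d) ℂ) : Prop :=
  ∀ X, X.PosSemidef → (E X).PosSemidef

/-- Trace-nonincreasing on PSD matrices. -/
def TNI {d : ℕ} (E : Matrix (Fin d) (Fin d) ℂ →ₗ[ℂ] Matrix (Fin d) (Fin d) ℂ) : Prop :=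
  ∀ X : Matrix (Fin d) (Fin d) ℂ, X.PosSemidef → (E X).trace.re ≤ X.trace.re

/-- `Ed` is the Hilbert–Schmidt adjoint of `E`. -/
def IsAdjoint {d : ℕ} (E Ed : Matrix (Fin d) (Fin d) ℂ →ₗ[ℂ] Matrix (Fin d) (Fin d) ℂ) : Prop :=
  ∀ X Y, ((E X)ᴴ * Y).trace = (Xᴴ * (Ed Y)).trace

/-- Partial trace over the first tensor factor. -/
def ptraceA {d d' : ℕ} (M : Matrix (Fin d × Fin d') (Fin d × Fin d') ℂ) :
    Matrix (Fin d') (Fin d') ℂ :=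
  Matrix.of fun i j => ∑ k : Fin d, M (k, i) (k, j)

/-- The map `E ⊗ id` acting on bipartite matrices. -/
def tensId {d d' : ℕ} (E : Matrix (Fin d) (Fin d) ℂ →ₗ[ℂ] Matrix (Fin d) (Fin d) ℂ)
    (M : Matrix (Fin d × Fin d') (Fin d × Fin d') ℂ) :
    Matrix (Fin d × Fin d') (Fin d × Fin d') ℂ :=
  Matrix.of fun p q => E (Matrix.of fun i k => M (i, p.2) (k, q.2)) p.1 q.1

/-- The positive semidefinite square root of a positive semidefinite matrix
(restored: `Matrix.PosSemidef.sqrt` was removed from Mathlib; old definition). -/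
def Matrix.PosSemidef.sqrt {d : ℕ} {A : Matrix (Fin d) (Fin d) ℂ} (hA : A.PosSemidef) :
    Matrix (Fin d) (Fin d) ℂ :=
  (hA.1.eigenvectorUnitary : Matrix (Fin d) (Fin d) ℂ) *
    diagonal ((↑) ∘ (fun x : ℝ => Real.sqrt x) ∘ hA.1.eigenvalues) *
    (star hA.1.eigenvectorUnitary : Matrix (Fin d) (Fin d) ℂ)

lemma Matrix.PosSemidef.posSemidef_sqrt {d : ℕ} {A : Matrix (Fin d) (Fin d) ℂ}
    (hA : A.PosSemidef) : hA.sqrt.PosSemidef := by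
  unfold Matrix.PosSemidef.sqrt
  have hD : (diagonal ((↑) ∘ (fun x : ℝ => Real.sqrt x) ∘ hA.1.eigenvalues) :
      Matrix (Fin d) (Fin d) ℂ).PosSemidef :=
    posSemidef_diagonal_iff.mpr fun i => by
      simp only [Function.comp_apply]
      exact Complex.zero_le_real.mpr (Real.sqrt_nonneg _)
  have := hD.mul_mul_conjTranspose_same (hA.1.eigenvectorUnitary : Matrix (Fin d) (Fin d) ℂ)
  simpa [Unitary.coe_star, star_eq_conjTranspose] using this

lemma Matrix.PosSemidef.sqrt_mul_self {d : ℕ} {A : Matrix (Fin d) (Fin d) ℂ}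
    (hA : A.PosSemidef) : hA.sqrt * hA.sqrt = A := by
  unfold Matrix.PosSemidef.sqrt
  set U := hA.1.eigenvectorUnitary
  have hU : (star U : Matrix (Fin d) (Fin d) ℂ) * (U : Matrix (Fin d) (Fin d) ℂ) = 1 :=
    Unitary.coe_star_mul_self U
  have hD : (diagonal ((↑) ∘ (fun x : ℝ => Real.sqrt x) ∘ hA.1.eigenvalues) :
      Matrix (Fin d) (Fin d) ℂ) * diagonal ((↑) ∘ (fun x : ℝ => Real.sqrt x) ∘ hA.1.eigenvalues)
      = diagonal (RCLike.ofReal ∘ hA.1.eigenvalues) := by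
    rw [diagonal_mul_diagonal]
    congr 1
    funext i
    simp only [Function.comp_apply]
    rw [← Complex.ofReal_mul, Real.mul_self_sqrt (hA.eigenvalues_nonneg i)]
    rfl
  conv_rhs => rw [hA.1.spectral_theorem, Unitary.conjStarAlgAut_apply]
  calc _ = (U : Matrix (Fin d) (Fin d) ℂ) *
        (diagonal ((↑) ∘ (fun x : ℝ => Real.sqrt x) ∘ hA.1.eigenvalues) *
          ((star U : Matrix (Fin d) (Fin d) ℂ) * (U : Matrix (Fin d) (Fin d) ℂ)) *
          diagonal ((↑) ∘ (fun x : ℝ => Real.sqrt x) ∘ hA.1.eigenvalues)) *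
        (star U : Matrix (Fin d) (Fin d) ℂ) := by simp only [Matrix.mul_assoc]
    _ = _ := by rw [hU, Matrix.mul_one, hD]


section Helpers

lemma psd_diag_nonneg {d : ℕ} {M : Matrix (Fin d) (Fin d) ℂ} (hM : M.PosSemidef) (i : Fin d) :
    0 ≤ M i i := by
  have := hM.dotProduct_mulVec_nonneg (Pi.single i 1)
  simpa [dotProduct, Pi.single_apply, Finset.sum_ite_eq'] using this

lemma psd_trace_nonneg {d : ℕ} {M : Matrix (Fin d) (Fin d) ℂ} (hM : M.PosSemidef) :
    0 ≤ M.trace :=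
  Finset.sum_nonneg fun i _ => psd_diag_nonneg hM i

lemma psd_trace_real {d : ℕ} {M : Matrix (Fin d) (Fin d) ℂ} (hM : M.PosSemidef) :
    M.trace = ((M.trace.re : ℝ) : ℂ) := by
  have h := psd_trace_nonneg hM
  rw [Complex.le_def] at h
  exact (Complex.ext (by simp) (by simp [← h.2])).symm

lemma psd_smul {d : ℕ} {M : Matrix (Fin d) (Fin d) ℂ} (hM : M.PosSemidef) {c : ℝ} (hc : 0 ≤ c) :
    ((c : ℂ) • M).PosSemidef := by
  rw [posSemidef_iff_dotProduct_mulVec]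
  constructor
  · have := hM.1
    unfold Matrix.IsHermitian at *
    rw [conjTranspose_smul, this]
    congr 1
    simp
  · intro x
    rw [smul_mulVec, dotProduct_smul]
    exact mul_nonneg (by exact_mod_cast hc) (hM.dotProduct_mulVec_nonneg x)

lemma psd_trace_zero {d : ℕ} {M : Matrix (Fin d) (Fin d) ℂ} (hM : M.PosSemidef)
    (h : M.trace = 0) : M = 0 := by
  have hS : hM.sqrtᴴ * hM.sqrt = M := by
    rw [hM.posSemidef_sqrt.1, hM.sqrt_mul_self]
  rw [← hS]
  rw [← hS] at h
  suffices hz : hM.sqrt = 0 by rw [conjTranspose_mul_self_eq_zero.mpr hz]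
  have h2 : ∑ j, ∑ i, Complex.normSq (hM.sqrt i j) = 0 := by
    have := congrArg Complex.re h
    simpa [Matrix.trace, Matrix.mul_apply, Matrix.diag, Complex.mul_re, Complex.normSq] using this
  ext i j
  have hj : ∑ i, Complex.normSq (hM.sqrt i j) = 0 :=
    (Finset.sum_eq_zero_iff_of_nonneg (fun j _ => Finset.sum_nonneg
      (fun i _ => Complex.normSq_nonneg _))).mp h2 j (Finset.mem_univ j)
  have := (Finset.sum_eq_zero_iff_of_nonneg (fun i _ => Complex.normSq_nonneg _)).mp hj i
    (Finset.mem_univ i)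
  simpa [Complex.normSq_eq_zero] using this

lemma psd_sum {d : ℕ} {ι : Type*} (s : Finset ι) (f : ι → Matrix (Fin d) (Fin d) ℂ)
    (h : ∀ i ∈ s, (f i).PosSemidef) : (∑ i ∈ s, f i).PosSemidef :=
  Finset.sum_induction f _ (fun a b ha hb => ha.add hb) Matrix.PosSemidef.zero h

end Helpers

/-- SR(ρ^{1/2} B ρ^{1/2}) ≤ IR(B). -/
theorem sr_conj_le_ir {d na nx : ℕ}
    (B : Fin nx → Fin na → Matrix (Fin d) (Fin d) ℂ) (hB : IsMA B)
    (ρ : Matrix (Fin d) (Fin d) ℂ) (hρ : ρ.PosSemidef) (hρ1 : ρ.trace = 1) :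
    SR (fun x a => hρ.sqrt * B x a * hρ.sqrt) ≤ IR B := by
  have hd : 0 < d := by
    rcases Nat.eq_zero_or_pos d with h | h
    · subst h; simp [Matrix.trace] at hρ1
    · exact h
  have hSh : hρ.sqrtᴴ = hρ.sqrt := hρ.posSemidef_sqrt.1
  have hSS : hρ.sqrt * hρ.sqrt = ρ := hρ.sqrt_mul_self
  have hconj : ∀ {M : Matrix (Fin d) (Fin d) ℂ}, M.PosSemidef →
      (hρ.sqrt * M * hρ.sqrt).PosSemidef := fun {M} hM => by
    simpa [hSh] using hM.conjTranspose_mul_mul_same hρ.sqrt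
  rw [SR, IR]
  apply csInf_le_csInf
  · exact ⟨0, fun y hy => hy.1⟩
  · -- the IR feasible set is nonempty
    rcases Nat.eq_zero_or_pos nx with hnx | hnx
    · subst hnx
      exact ⟨0, le_refl 0, (fun _ _ => 0), ⟨fun x _ => x.elim0, fun x => x.elim0⟩,
        1, (fun _ => 1), (fun _ _ _ => 0),
        ⟨fun _ => Matrix.PosSemidef.one, by simp⟩,
        fun _ _ _ => le_refl 0, fun x _ => x.elim0, fun x _ => x.elim0⟩
    · have x0 : Fin nx := ⟨0, hnx⟩
      have hna : 0 < na := by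
        by_contra hna
        have hna0 : na = 0 := by omega
        subst hna0
        have h1 := hB.2 x0
        simp only [Finset.univ_eq_empty, Finset.sum_empty] at h1
        have h2 := congrFun (congrFun h1 ⟨0, hd⟩) ⟨0, hd⟩
        simp [Matrix.one_apply] at h2
      have hnaR : (na : ℝ) ≠ 0 := Nat.cast_ne_zero.mpr (by omega)
      have hnaC : (na : ℂ) ≠ 0 := Nat.cast_ne_zero.mpr (by omega)
      have h1naC : (1 + (na : ℂ)) ≠ 0 := by
        have : ((1 + (na : ℝ) : ℝ) : ℂ) ≠ 0 := Complex.ofReal_ne_zero.mpr (by positivity)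
        simpa using this
      have h1B : ∀ x a, ((1 : Matrix (Fin d) (Fin d) ℂ) - B x a).PosSemidef := by
        intro x a
        have he : (1 : Matrix (Fin d) (Fin d) ℂ) - B x a
            = ∑ a' ∈ Finset.univ.erase a, B x a' := by
          rw [← hB.2 x, ← Finset.sum_erase_add _ _ (Finset.mem_univ a)]
          abel
        rw [he]
        exact psd_sum _ _ (fun a' _ => hB.1 x a')
      refine ⟨(na : ℝ), Nat.cast_nonneg na,
        (fun x a => (((na : ℝ)⁻¹ : ℝ) : ℂ) • (1 - B x a) + ((((na : ℝ) ^ 2)⁻¹ : ℝ) : ℂ) • 1),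
        ⟨fun x a => (psd_smul (h1B x a) (by positivity)).add
          (psd_smul Matrix.PosSemidef.one (by positivity)), fun x => ?_⟩,
        1, (fun _ => 1), (fun _ _ _ => (na : ℝ)⁻¹),
        ⟨fun _ => Matrix.PosSemidef.one, by simp⟩,
        fun _ _ _ => by positivity, fun x l => ?_, fun x a => ?_⟩
      · rw [Finset.sum_add_distrib, ← Finset.smul_sum, Finset.sum_sub_distrib, hB.2 x]
        simp only [Finset.sum_const, Finset.card_univ, Fintype.card_fin]
        match_scalars <;> (push_cast; field_simp [hnaC, h1naC]; try ring)
      · simp only [Finset.sum_const, Finset.card_univ, Fintype.card_fin, nsmul_eq_mul]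
        exact mul_inv_cancel₀ hnaR
      · rw [Fin.sum_univ_one]
        match_scalars <;> (push_cast; field_simp [hnaC, h1naC]; try ring)
  · -- inclusion of the IR feasible set in the SR feasible set
    rintro t ⟨ht0, N, hN, nl, G, p, hG, hp0, hp1, hD⟩
    refine ⟨ht0, (fun x a => hρ.sqrt * N x a * hρ.sqrt),
      ⟨fun x a => hconj (hN.1 x a), ρ, ⟨hρ, hρ1⟩, fun x => ?_⟩, ?_⟩
    · rw [← Finset.sum_mul, ← Matrix.mul_sum, hN.2 x, Matrix.mul_one, hSS]
    · have hMl : ∀ l, (hρ.sqrt * G l * hρ.sqrt).PosSemidef := fun l => hconj (hG.1 l)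
      have htr : ∀ l, (hρ.sqrt * G l * hρ.sqrt).trace
          = (((hρ.sqrt * G l * hρ.sqrt).trace.re : ℝ) : ℂ) := fun l => psd_trace_real (hMl l)
      have hq0 : ∀ l, 0 ≤ (hρ.sqrt * G l * hρ.sqrt).trace.re := fun l => by
        have := psd_trace_nonneg (hMl l)
        simpa using (Complex.le_def.mp this).1
      have hqsum : ∑ l, (hρ.sqrt * G l * hρ.sqrt).trace.re = 1 := by
        have h1 : ∑ l, (hρ.sqrt * G l * hρ.sqrt).trace = 1 := by
          rw [← Matrix.trace_sum]
          have h2 : ∑ l, hρ.sqrt * G l * hρ.sqrt = hρ.sqrt * (∑ l, G l) * hρ.sqrt := by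
            rw [Matrix.mul_sum, Finset.sum_mul]
          rw [h2, hG.2, Matrix.mul_one, hSS, hρ1]
        have h2 : ((∑ l, (hρ.sqrt * G l * hρ.sqrt).trace.re : ℝ) : ℂ) = ((1 : ℝ) : ℂ) := by
          push_cast
          rw [← h1]
          exact (Finset.sum_congr rfl fun l _ => (htr l).symm)
        exact_mod_cast h2
      refine ⟨nl, (fun l => (hρ.sqrt * G l * hρ.sqrt).trace.re), p,
        (fun l => if _ : (hρ.sqrt * G l * hρ.sqrt).trace.re = 0 then ρ
          else ((((hρ.sqrt * G l * hρ.sqrt).trace.re)⁻¹ : ℝ) : ℂ) • (hρ.sqrt * G l * hρ.sqrt)),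
        hq0, hqsum, hp0, hp1, fun l => ?_, fun x a => ?_⟩
      · by_cases hql : (hρ.sqrt * G l * hρ.sqrt).trace.re = 0
        · simp only [dif_pos hql]
          exact ⟨hρ, hρ1⟩
        · simp only [dif_neg hql]
          refine ⟨psd_smul (hMl l) (inv_nonneg.mpr (hq0 l)), ?_⟩
          have h3 := htr l
          set r := (hρ.sqrt * G l * hρ.sqrt).trace.re with hrdef
          rw [Matrix.trace_smul, smul_eq_mul, h3, ← Complex.ofReal_mul,
            inv_mul_cancel₀ hql, Complex.ofReal_one]
      · have key : (((1 + t : ℝ))⁻¹ : ℂ) •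
            ((hρ.sqrt * B x a * hρ.sqrt) + (t : ℂ) • (hρ.sqrt * N x a * hρ.sqrt))
            = hρ.sqrt * ((((1 + t : ℝ))⁻¹ : ℂ) • (B x a + (t : ℂ) • N x a)) * hρ.sqrt := by
          simp only [Matrix.mul_add, Matrix.add_mul, Matrix.mul_smul, Matrix.smul_mul]
        show (((1 + t : ℝ))⁻¹ : ℂ) •
            ((hρ.sqrt * B x a * hρ.sqrt) + (t : ℂ) • (hρ.sqrt * N x a * hρ.sqrt)) = _
        have hD' : ∀ x a, (((1 + t : ℝ))⁻¹ : ℂ) • (B x a + (t : ℂ) • N x a)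
            = ∑ l, (p x a l : ℂ) • G l := fun x a => hD x a
        rw [key, hD' x a, Matrix.mul_sum, Finset.sum_mul]
        refine Finset.sum_congr rfl fun l _ => ?_
        beta_reduce
        rw [Matrix.mul_smul, Matrix.smul_mul]
        by_cases hql : (hρ.sqrt * G l * hρ.sqrt).trace.re = 0
        · have hMl0 : hρ.sqrt * G l * hρ.sqrt = 0 :=
            psd_trace_zero (hMl l) (by rw [htr l, hql]; simp)
          simp [dif_pos hql, hql, hMl0]
        · rw [dif_neg hql, smul_smul]
          congr 1
          push_cast
          field_simp [Complex.ofReal_ne_zero.mpr hql]
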